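/- Let T > 0, 0 < γ ≤ Γ ≤ T, and let Δt > 0 be such that K = T/Δt is a positive integer and γ/Δt and Γ/Δt are positive integers. Then the image of the continuous uncertainty set under the averaging operator equals the discrete uncertainty set: L†(D) = D_K, i.e. (a) for every δ ∈ D the vector L†δ belongs to D_K, and (b) every vector in D_K equals L†δ for some δ ∈ D. -/

import Mathlib

open MeasureTheory Set

noncomputable section

/-- The continuous-time uncertainty set `D` of measurable frequency-deviation
scenarios `δ : [0,T] → [-1,1]` whose total absolute deviation over every
backward window of length `Γ` is at most `γ`. -/
def Dset (T Γ γ : ℝ) : Set (ℝ → ℝ) :=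
  {δ | Measurable δ ∧ (∀ t ∈ Icc (0:ℝ) T, δ t ∈ Icc (-1:ℝ) 1) ∧
    ∀ t ∈ Icc (0:ℝ) T, (∫ s in (max (t - Γ) 0)..t, |δ s|) ≤ γ}

/-- The nonnegative part `D⁺` of the continuous uncertainty set. -/
def DsetPlus (T Γ γ : ℝ) : Set (ℝ → ℝ) :=
  Dset T Γ γ ∩ {δ | ∀ t ∈ Icc (0:ℝ) T, δ t ∈ Icc (0:ℝ) 1}

/-- The discrete uncertainty set `D_K` (with `0`-based indexing): vectors in
`[-1,1]^K` whose sum of absolute values over each backward window of `W = Γ/Δt`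
periods is at most `g = γ/Δt`. -/
def DK (K W g : ℕ) : Set (Fin K → ℝ) :=
  {δ | (∀ l, |δ l| ≤ 1) ∧ ∀ k : Fin K,
    (∑ l ∈ Finset.univ.filter
      (fun l : Fin K => (k : ℕ) + 1 - W ≤ (l : ℕ) ∧ (l : ℕ) ≤ (k : ℕ)), |δ l|) ≤ (g : ℝ)}

/-- The nonnegative part `D_K⁺` of the discrete uncertainty set. -/
def DKplus (K W g : ℕ) : Set (Fin K → ℝ) :=
  DK K W g ∩ {δ | ∀ l, 0 ≤ δ l}

/-- The lifting operator `L` mapping a vector to the piecewise constant function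
with value `v k` on `[kΔt, (k+1)Δt)` (0-based), and `v (K-1)` at `t = KΔt`. -/
def lift (Δt : ℝ) {K : ℕ} (v : Fin K → ℝ) : ℝ → ℝ := fun t =>
  if h : min (⌊t / Δt⌋.toNat) (K - 1) < K then v ⟨min (⌊t / Δt⌋.toNat) (K - 1), h⟩ else 0

/-- The averaging operator `L†` mapping a function to its vector of averages
over the trading intervals. -/
def avg (Δt : ℝ) (K : ℕ) (w : ℝ → ℝ) : Fin K → ℝ := fun k =>
  (1 / Δt) * ∫ s in (((k : ℕ) : ℝ) * Δt)..((((k : ℕ) : ℝ) + 1) * Δt), w s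

/-- The integrand of the continuous-time state-of-charge. -/
def socIntegrand (ηp ηm : ℝ) (xb xr δ d : ℝ → ℝ) (s : ℝ) : ℝ :=
  ηp * max (xb s + δ s * xr s) 0 - (1 / ηm) * max (-(xb s + δ s * xr s)) 0 - d s

/-- The continuous-time state-of-charge `y(x^b, x^r, δ, y₀, t)`. -/
def soc (ηp ηm : ℝ) (xb xr δ d : ℝ → ℝ) (y0 t : ℝ) : ℝ :=
  y0 + ∫ s in (0:ℝ)..t, socIntegrand ηp ηm xb xr δ d s

/-- The discrete-time state-of-charge `y_k(𝐱^b, 𝐱^r, 𝛅, y₀)` (0-based indexing: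
the sum extends over the first `k` components). -/
def ysoc (Δt ηp ηm : ℝ) {K : ℕ} (xb xr δ d : Fin K → ℝ) (y0 : ℝ) (k : ℕ) : ℝ :=
  y0 + Δt * ∑ l ∈ Finset.univ.filter (fun l : Fin K => (l : ℕ) < k),
    (ηp * max (xb l + δ l * xr l) 0 - (1 / ηm) * max (-(xb l + δ l * xr l)) 0 - d l)



lemma aux_ii {f : ℝ → ℝ} (hm : Measurable f) {C : ℝ} (a b : ℝ)
    (hC : ∀ x ∈ Set.uIoc a b, |f x| ≤ C) : IntervalIntegrable f volume a b := by
  apply (intervalIntegrable_const (c := C)).mono_fun' hm.aestronglyMeasurable.restrict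
  refine (MeasureTheory.ae_restrict_iff' measurableSet_uIoc).2 ?_
  exact Filter.Eventually.of_forall fun x hx => by simpa [Real.norm_eq_abs] using hC x hx

lemma aux_floorEq {Δt : ℝ} (hΔt : 0 < Δt) {n : ℕ} {s : ℝ} (h1 : (n:ℝ) * Δt ≤ s)
    (h2 : s < ((n:ℝ)+1) * Δt) : ⌊s / Δt⌋.toNat = n := by
  have h3 : ⌊s / Δt⌋ = (n : ℤ) := by
    rw [Int.floor_eq_iff]
    constructor
    · rw [le_div_iff₀ hΔt]; exact_mod_cast h1
    · rw [div_lt_iff₀ hΔt]; push_cast; linarith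
  rw [h3]; rfl

lemma lift_eq {Δt : ℝ} (hΔt : 0 < Δt) {K : ℕ} (v : Fin K → ℝ) {n : ℕ} (hn : n < K)
    {s : ℝ} (h1 : (n:ℝ) * Δt ≤ s) (h2 : s < ((n:ℝ)+1) * Δt) :
    lift Δt v s = v ⟨n, hn⟩ := by
  have h3 : ⌊s / Δt⌋.toNat = n := aux_floorEq hΔt h1 h2
  have h4 : min n (K-1) = n := by omega
  simp only [lift, h3, h4, dif_pos hn]

lemma lift_measurable (Δt : ℝ) {K : ℕ} (v : Fin K → ℝ) : Measurable (lift Δt v) := by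
  have hfl : Measurable (fun t : ℝ => ⌊t / Δt⌋.toNat) :=
    (Measurable.of_discrete (f := Int.toNat)).comp'
      (Int.measurable_floor.comp' (measurable_id.div_const Δt))
  exact (Measurable.of_discrete (f := fun m : ℕ =>
      if h : min m (K-1) < K then v ⟨min m (K-1), h⟩ else 0)).comp' hfl

lemma lift_abs_le {Δt : ℝ} {K : ℕ} {v : Fin K → ℝ} (hbd : ∀ l, |v l| ≤ 1) (t : ℝ) :
    |lift Δt v t| ≤ 1 := by
  unfold lift; split
  · exact hbd _
  · simp

lemma abs_lift (Δt : ℝ) {K : ℕ} (v : Fin K → ℝ) (t : ℝ) :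
    |lift Δt v t| = lift Δt (fun l => |v l|) t := by
  unfold lift; split <;> simp

lemma integral_lift_cell {Δt : ℝ} (hΔt : 0 < Δt) {K : ℕ} (v : Fin K → ℝ) {n : ℕ} (hn : n < K)
    {c d : ℝ} (h1 : (n:ℝ) * Δt ≤ c) (h2 : c ≤ d) (h3 : d ≤ ((n:ℝ)+1) * Δt) :
    ∫ s in c..d, lift Δt v s = (d - c) * v ⟨n, hn⟩ := by
  have he : ∫ s in c..d, lift Δt v s = ∫ _s in c..d, v ⟨n, hn⟩ := by
    apply intervalIntegral.integral_congr_ae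
    rw [MeasureTheory.ae_iff]
    refine measure_mono_null ?_ (measure_singleton (((n:ℝ)+1) * Δt))
    · intro x hx
      simp only [Set.mem_setOf_eq, Classical.not_imp] at hx
      obtain ⟨hx1, hx2⟩ := hx
      rw [Set.uIoc_of_le h2] at hx1
      simp only [Set.mem_singleton_iff]
      by_contra hne
      exact hx2 (lift_eq hΔt v hn (le_trans h1 hx1.1.le)
        (lt_of_le_of_ne (le_trans hx1.2 h3) hne))
  rw [he, intervalIntegral.integral_const, smul_eq_mul]

lemma integral_lift_grid {Δt : ℝ} (hΔt : 0 < Δt) {K : ℕ} (hK : 0 < K) (v : Fin K → ℝ)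
    (hbd : ∀ l, |v l| ≤ 1) {p q : ℕ} (hpq : p ≤ q) (hq : q ≤ K) :
    ∫ s in ((p:ℝ) * Δt)..((q:ℝ) * Δt), lift Δt v s
      = Δt * ∑ i ∈ Finset.Ico p q, v ⟨min i (K-1), by omega⟩ := by
  have hii : ∀ a b : ℝ, IntervalIntegrable (lift Δt v) volume a b := fun a b =>
    aux_ii (lift_measurable Δt v) a b (fun x _ => lift_abs_le hbd x)
  have hsum := intervalIntegral.sum_integral_adjacent_intervals_Ico
    (f := lift Δt v) (μ := volume) (a := fun i : ℕ => (i:ℝ) * Δt) hpq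
    (fun k _ => hii _ _)
  rw [← hsum, Finset.mul_sum]
  apply Finset.sum_congr rfl
  intro i hi
  have hiK : i < K := by
    have := Finset.mem_Ico.mp hi; omega
  have hc1 : ((i:ℕ):ℝ) * Δt ≤ (((i+1:ℕ)):ℝ) * Δt := by push_cast; nlinarith
  have hc2 : (((i+1:ℕ)):ℝ) * Δt ≤ ((i:ℝ)+1) * Δt := by push_cast; nlinarith
  rw [integral_lift_cell hΔt v hiK le_rfl hc1 hc2]
  have he : (((i+1:ℕ)):ℝ) * Δt - (i:ℝ) * Δt = Δt := by push_cast; ring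
  rw [he]
  congr 1
  exact congrArg v (Fin.ext (by simp; omega)).symm

lemma filter_sum_eq {K : ℕ} (hK : 0 < K) (f : Fin K → ℝ) (p : ℕ) (k : Fin K) :
    ∑ l ∈ Finset.univ.filter (fun l : Fin K => p ≤ (l:ℕ) ∧ (l:ℕ) ≤ (k:ℕ)), f l
      = ∑ i ∈ Finset.Ico p ((k:ℕ)+1), f ⟨min i (K-1), by omega⟩ := by
  rw [Finset.sum_filter]
  have h1 : ∀ l : Fin K, (if p ≤ (l:ℕ) ∧ (l:ℕ) ≤ (k:ℕ) then f l else 0)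
      = (fun i : ℕ => if p ≤ i ∧ i ≤ (k:ℕ) then f ⟨min i (K-1), by omega⟩ else 0) (l:ℕ) := by
    intro l
    simp only
    congr 1
    exact congrArg f (Fin.ext (by simp; omega)).symm
  rw [Finset.sum_congr rfl (fun l _ => h1 l)]
  rw [Fin.sum_univ_eq_sum_range (fun i : ℕ => if p ≤ i ∧ i ≤ (k:ℕ) then f ⟨min i (K-1), by omega⟩ else 0) K]
  rw [← Finset.sum_filter]
  apply Finset.sum_congr
  · ext i
    simp only [Finset.mem_filter, Finset.mem_range, Finset.mem_Ico]
    have := k.isLt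
    omega
  · intros; rfl

lemma window_sum_le {K W g : ℕ} (hK : 0 < K) {v : Fin K → ℝ} (hv : v ∈ DK K W g)
    {m : ℕ} (hm : m ≤ K) :
    ∑ i ∈ Finset.Ico (m - W) m, |v ⟨min i (K-1), by omega⟩| ≤ (g:ℝ) := by
  rcases Nat.eq_zero_or_pos m with rfl | hm1
  · simp
  · have hk : m - 1 < K := by omega
    have h2 := hv.2 ⟨m-1, hk⟩
    rw [filter_sum_eq hK (fun l => |v l|) ((m-1)+1-W) ⟨m-1, hk⟩] at h2
    have e1 : (m-1)+1 = m := by omega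
    rw [e1] at h2
    exact h2

/-- part of Proposition 3(i): the image of the continuous
uncertainty set under the averaging operator equals the discrete uncertainty
set, i.e. `L†(D) = D_K`. -/
theorem stmt_4 (Δt : ℝ) (K W g : ℕ) (hΔt : 0 < Δt)
    (hg : 0 < g) (hgW : g ≤ W) (hWK : W ≤ K)
    (T Γ γ : ℝ) (hT : T = K * Δt) (hΓ : Γ = W * Δt) (hγ : γ = g * Δt) :
    (∀ δ ∈ Dset T Γ γ, avg Δt K δ ∈ DK K W g) ∧
    (∀ v ∈ DK K W g, ∃ δ ∈ Dset T Γ γ, avg Δt K δ = v) := by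
  have hK : 0 < K := by omega
  constructor
  · rintro δ ⟨hmeas, hbdd, hwin⟩
    have habs : ∀ a b : ℝ, 0 ≤ a → a ≤ b → b ≤ T →
        IntervalIntegrable (fun s => |δ s|) volume a b := by
      intro a b h1 h2 h3
      apply aux_ii hmeas.abs
      intro x hx
      rw [Set.uIoc_of_le h2] at hx
      have hb := hbdd x ⟨le_trans h1 hx.1.le, le_trans hx.2 h3⟩
      rw [abs_abs]
      exact abs_le.mpr ⟨hb.1, hb.2⟩
    have hTi : ∀ i : ℕ, i < K → ((i:ℝ)+1) * Δt ≤ T := by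
      intro i hi
      rw [hT]
      have h1 : (i:ℝ)+1 ≤ (K:ℝ) := by exact_mod_cast Nat.succ_le_of_lt hi
      nlinarith
    have hcell : ∀ (i : ℕ) (hi : i < K), |avg Δt K δ ⟨i, hi⟩|
        ≤ (1/Δt) * ∫ s in ((i:ℝ) * Δt)..(((i:ℝ)+1) * Δt), |δ s| := by
      intro i hi
      show |(1/Δt) * ∫ s in (((i:ℕ):ℝ) * Δt)..((((i:ℕ):ℝ)+1) * Δt), δ s| ≤ _
      rw [abs_mul, abs_of_pos (by positivity : (0:ℝ) < 1/Δt)]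
      exact mul_le_mul_of_nonneg_left
        (intervalIntegral.abs_integral_le_integral_abs (by nlinarith)) (by positivity)
    have hcellb : ∀ (i : ℕ), i < K →
        (∫ s in ((i:ℝ) * Δt)..(((i:ℝ)+1) * Δt), |δ s|) ≤ Δt := by
      intro i hi
      have h0 : (0:ℝ) ≤ (i:ℝ) * Δt := by positivity
      have h1 : (i:ℝ)*Δt ≤ ((i:ℝ)+1)*Δt := by nlinarith
      have hb := hTi i hi
      calc (∫ s in ((i:ℝ)*Δt)..(((i:ℝ)+1)*Δt), |δ s|)
          ≤ ∫ _s in ((i:ℝ)*Δt)..(((i:ℝ)+1)*Δt), (1:ℝ) := by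
            apply intervalIntegral.integral_mono_on h1 (habs _ _ h0 h1 hb)
              intervalIntegrable_const
            intro x hx
            have hb2 := hbdd x ⟨le_trans h0 hx.1, le_trans hx.2 hb⟩
            exact abs_le.mpr ⟨hb2.1, hb2.2⟩
        _ = Δt := by rw [intervalIntegral.integral_const, smul_eq_mul]; ring
    refine ⟨fun l => ?_, fun k => ?_⟩
    · have h := le_trans (hcell l.1 l.2)
        (mul_le_mul_of_nonneg_left (hcellb l.1 l.2) (by positivity))
      calc |avg Δt K δ l| ≤ (1/Δt) * Δt := h
        _ = 1 := by field_simp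
    · rw [filter_sum_eq hK (fun l => |avg Δt K δ l|) ((k:ℕ)+1-W) k]
      have hkK := k.isLt
      have hadj := intervalIntegral.sum_integral_adjacent_intervals_Ico
        (f := fun s => |δ s|) (μ := volume) (a := fun i : ℕ => (i:ℝ)*Δt)
        (Nat.sub_le ((k:ℕ)+1) W : (k:ℕ)+1-W ≤ (k:ℕ)+1) ?hint
      case hint =>
        intro i hi
        have hiK : i < K := by have := Set.mem_Ico.mp hi; omega
        beta_reduce
        refine habs _ _ (by positivity) (by push_cast; nlinarith) ?_
        have hTI := hTi i hiK
        push_cast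
        linarith
      beta_reduce at hadj
      refine le_trans (Finset.sum_le_sum (g := fun i : ℕ =>
        (1/Δt) * ∫ s in ((i:ℝ)*Δt)..(((i:ℝ)+1)*Δt), |δ s|) ?h1) ?h2
      case h1 =>
        intro i hi
        have hiK : i < K := by have := Finset.mem_Ico.mp hi; omega
        beta_reduce
        simp only [show min i (K-1) = i from by omega]
        exact hcell i hiK
      case h2 =>
        rw [← Finset.mul_sum]
        have hsum2 : (∑ i ∈ Finset.Ico ((k:ℕ)+1-W) ((k:ℕ)+1),
            ∫ s in ((i:ℝ)*Δt)..(((i:ℝ)+1)*Δt), |δ s|)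
            = ∫ s in ((((k:ℕ)+1-W:ℕ)):ℝ)*Δt..((((k:ℕ)+1:ℕ)):ℝ)*Δt, |δ s| := by
          rw [← hadj]
          apply Finset.sum_congr rfl
          intro i _
          congr 1
          push_cast
          ring
        rw [hsum2]
        have ht1 : ((((k:ℕ)+1:ℕ)):ℝ)*Δt ∈ Icc (0:ℝ) T := by
          constructor
          · positivity
          · rw [hT]
            have : (((k:ℕ)+1:ℕ):ℝ) ≤ (K:ℝ) := by exact_mod_cast hkK
            nlinarith
        have hw := hwin _ ht1
        have hmax : max (((((k:ℕ)+1:ℕ)):ℝ)*Δt - Γ) 0 = ((((k:ℕ)+1-W:ℕ)):ℝ)*Δt := by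
          rcases le_or_gt W ((k:ℕ)+1) with hc | hc
          · rw [max_eq_left]
            · rw [hΓ]
              push_cast [hc]
              ring
            · rw [hΓ]
              have h1 : (W:ℝ) ≤ (((k:ℕ)+1:ℕ):ℝ) := by exact_mod_cast hc
              push_cast at h1 ⊢
              nlinarith
          · have hp0 : (k:ℕ)+1-W = 0 := by omega
            rw [max_eq_right, hp0]
            · simp
            · rw [hΓ]
              have h1 : (((k:ℕ)+1:ℕ):ℝ) ≤ (W:ℝ) := by exact_mod_cast hc.le
              push_cast at h1 ⊢
              nlinarith
        rw [hmax] at hw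
        calc (1/Δt) * ∫ s in ((((k:ℕ)+1-W:ℕ)):ℝ)*Δt..((((k:ℕ)+1:ℕ)):ℝ)*Δt, |δ s|
            ≤ (1/Δt) * γ := mul_le_mul_of_nonneg_left hw (by positivity)
          _ = (g:ℝ) := by rw [hγ]; field_simp
  · intro v hv
    obtain ⟨hv1, hv2⟩ := hv
    have hw1 : ∀ l : Fin K, |(fun l : Fin K => |v l|) l| ≤ 1 := fun l => by
      simpa [abs_abs] using hv1 l
    have hii : ∀ a b : ℝ, IntervalIntegrable (lift Δt v) volume a b := fun a b =>
      aux_ii (lift_measurable Δt v) a b (fun x _ => lift_abs_le hv1 x)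
    have hiiw : ∀ a b : ℝ, IntervalIntegrable (lift Δt (fun l : Fin K => |v l|)) volume a b :=
      fun a b => aux_ii (lift_measurable Δt _) a b (fun x _ => lift_abs_le hw1 x)
    refine ⟨lift Δt v, ⟨lift_measurable Δt v, ?_, ?_⟩, ?_⟩
    · intro t _
      exact abs_le.mp (lift_abs_le hv1 t)
    · intro t ht
      rw [intervalIntegral.integral_congr (g := fun s => lift Δt (fun l : Fin K => |v l|) s)
        (fun x _ => abs_lift Δt v x)]
      have hfl : 0 ≤ ⌊t/Δt⌋ := Int.floor_nonneg.2 (div_nonneg ht.1 hΔt.le)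
      set N := ⌊t/Δt⌋.toNat with hN
      have hNcast : (N:ℝ) = ((⌊t/Δt⌋ : ℤ) : ℝ) := by
        rw [hN]; exact_mod_cast congrArg (fun z : ℤ => (z:ℝ)) (Int.toNat_of_nonneg hfl)
      have hup : (N:ℝ) ≤ t/Δt := by rw [hNcast]; exact Int.floor_le _
      have hup2 : t/Δt < (N:ℝ)+1 := by rw [hNcast]; exact Int.lt_floor_add_one _
      set n := min N (K-1) with hn
      have hnK : n < K := by omega
      have hn1 : (n:ℝ)*Δt ≤ t := by
        have h1 : (n:ℝ) ≤ (N:ℝ) := by exact_mod_cast min_le_left N (K-1)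
        have h2 : (N:ℝ)*Δt ≤ t := by
          have h3 := mul_le_mul_of_nonneg_right hup hΔt.le
          rwa [div_mul_cancel₀ t hΔt.ne'] at h3
        nlinarith
      have hn2 : t ≤ ((n:ℝ)+1)*Δt := by
        rcases le_or_gt N (K-1) with hc | hc
        · have he : n = N := by omega
          rw [he]
          have h3 := mul_lt_mul_of_pos_right hup2 hΔt
          rw [div_mul_cancel₀ t hΔt.ne'] at h3
          linarith
        · have he : n = K-1 := by omega
          have he2 : ((n:ℝ)+1) = (K:ℝ) := by
            rw [he, Nat.cast_sub hK]; push_cast; ring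
          rw [he2]
          rw [hT] at ht
          exact ht.2
      rcases le_or_gt Γ t with hΓt | hΓt
      · -- t ≥ Γ
        have hWn : W ≤ n+1 := by
          have h1 : (W:ℝ)*Δt ≤ ((n:ℝ)+1)*Δt := by rw [← hΓ]; linarith
          have h2 : (W:ℝ) ≤ (n:ℝ)+1 := le_of_mul_le_mul_right h1 hΔt
          have h3 : (W:ℝ) ≤ ((n+1:ℕ):ℝ) := by push_cast; linarith
          exact_mod_cast h3
        set p := n+1-W with hp
        have hpcast : (p:ℝ) = (n:ℝ)+1-(W:ℝ) := by
          rw [hp, Nat.cast_sub hWn]; push_cast; ring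
        have hmax : max (t - Γ) 0 = t - Γ := max_eq_left (by linarith)
        rcases Nat.eq_zero_or_pos p with hp0 | hp1
        · -- p = 0 : t = (n+1)Δt and t - Γ = 0
          have hnW : n+1 = W := by omega
          have hΓeq : Γ = ((n:ℝ)+1)*Δt := by
            rw [hΓ, show (W:ℝ) = (n:ℝ)+1 from by rw [← hnW]; push_cast; ring]
          have hteq : t = ((n:ℝ)+1)*Δt := le_antisymm hn2 (by linarith)
          rw [hmax]
          have h0 : t - Γ = ((0:ℕ):ℝ)*Δt := by rw [hteq, hΓeq]; simp
          have h1 : t = (((n+1:ℕ)):ℝ)*Δt := by rw [hteq]; push_cast; ring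
          rw [h0, h1, integral_lift_grid hΔt hK _ hw1 (Nat.zero_le _) (by omega)]
          have hws := window_sum_le hK ⟨hv1, hv2⟩ (m := n+1) (by omega : n+1 ≤ K)
          rw [show n+1-W = 0 from by omega] at hws
          calc Δt * ∑ i ∈ Finset.Ico 0 (n+1),
                (fun l : Fin K => |v l|) ⟨min i (K-1), by omega⟩
              ≤ Δt * (g:ℝ) := mul_le_mul_of_nonneg_left hws hΔt.le
            _ = γ := by rw [hγ]; ring
        · -- p ≥ 1
          have hpK : p - 1 < K := by omega
          have hpn : p ≤ n := by omega
          have hq1 : ((p-1:ℕ):ℝ) = (p:ℝ)-1 := by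
            rw [Nat.cast_sub hp1]; push_cast; ring
          have hb1 : ((p-1:ℕ):ℝ)*Δt ≤ t - Γ := by
            rw [hq1, hpcast, hΓ]; linarith [hn1]
          have hb2 : t - Γ ≤ (p:ℝ)*Δt := by
            rw [hpcast, hΓ]; linarith [hn2]
          have hb3 : (p:ℝ)*Δt ≤ (n:ℝ)*Δt := by
            have hW1 : (1:ℝ) ≤ (W:ℝ) := by exact_mod_cast (by omega : 1 ≤ W)
            rw [hpcast]
            have h5 := mul_le_mul_of_nonneg_right hW1 hΔt.le
            linarith
          have hb4 : (p:ℝ)*Δt ≤ (((p-1:ℕ):ℝ)+1)*Δt := le_of_eq (by rw [hq1]; ring)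
          have hI1 := integral_lift_cell hΔt (fun l : Fin K => |v l|) hpK hb1 hb2 hb4
          have hI2 := integral_lift_grid hΔt hK (fun l : Fin K => |v l|) hw1 hpn
            (by omega : n ≤ K)
          have hI3 := integral_lift_cell hΔt (fun l : Fin K => |v l|) hnK
            (le_refl ((n:ℝ)*Δt)) hn1 hn2
          have hsplit2 := intervalIntegral.integral_add_adjacent_intervals
            (hiiw ((p:ℝ)*Δt) ((n:ℝ)*Δt)) (hiiw ((n:ℝ)*Δt) t)
          have hsplit1 := intervalIntegral.integral_add_adjacent_intervals
            (hiiw (t-Γ) ((p:ℝ)*Δt)) (hiiw ((p:ℝ)*Δt) t)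
          rw [hmax, ← hsplit1, ← hsplit2, hI1, hI2, hI3]
          have hA := window_sum_le hK ⟨hv1, hv2⟩ (m := n) (by omega : n ≤ K)
          have hB := window_sum_le hK ⟨hv1, hv2⟩ (m := n+1) (by omega : n+1 ≤ K)
          rw [Finset.sum_eq_sum_Ico_succ_bot (by omega : n-W < n)] at hA
          rw [show (n-W)+1 = p from by omega] at hA
          rw [show n+1-W = p from by rw [hp], Finset.sum_Ico_succ_top (by omega : p ≤ n)] at hB
          simp only [show min (n-W) (K-1) = p-1 from by omega,
            show min n (K-1) = n from by omega] at hA hB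
          rw [show (p:ℝ)*Δt - (t-Γ) = ((n:ℝ)+1)*Δt - t from by rw [hpcast, hΓ]; ring, hγ]
          have hnn1 : (0:ℝ) ≤ ((n:ℝ)+1)*Δt - t := by linarith
          have hnn2 : (0:ℝ) ≤ t - (n:ℝ)*Δt := by linarith
          linarith [mul_le_mul_of_nonneg_left hA hnn1, mul_le_mul_of_nonneg_left hB hnn2]
      · -- t < Γ
        have hmax : max (t-Γ) 0 = ((0:ℕ):ℝ)*Δt := by
          rw [max_eq_right (by linarith)]; simp
        have hnW : n+1 ≤ W := by
          have h1 : (n:ℝ)*Δt < (W:ℝ)*Δt := by rw [← hΓ]; linarith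
          have h2 : (n:ℝ) < (W:ℝ) := lt_of_mul_lt_mul_right h1 hΔt.le
          have h3 : n < W := by exact_mod_cast h2
          omega
        rw [hmax]
        have hsplit := intervalIntegral.integral_add_adjacent_intervals
          (hiiw (((0:ℕ):ℝ)*Δt) ((n:ℝ)*Δt)) (hiiw ((n:ℝ)*Δt) t)
        rw [← hsplit, integral_lift_grid hΔt hK _ hw1 (Nat.zero_le n) (by omega : n ≤ K),
          integral_lift_cell hΔt (fun l : Fin K => |v l|) hnK (le_refl ((n:ℝ)*Δt)) hn1 hn2]
        have hB := window_sum_le hK ⟨hv1, hv2⟩ (m := n+1) (by omega : n+1 ≤ K)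
        rw [show (n+1)-W = 0 from by omega, Finset.sum_Ico_succ_top (Nat.zero_le n)] at hB
        simp only [show min n (K-1) = n from by omega] at hB
        rw [hγ]
        have hy : (0:ℝ) ≤ |v ⟨n, hnK⟩| := abs_nonneg _
        linarith [mul_le_mul_of_nonneg_left hB hΔt.le,
          mul_nonneg (sub_nonneg.2 hn2) hy]
    · funext k
      simp only [avg]
      rw [integral_lift_cell hΔt v k.isLt (le_refl (((k:ℕ):ℝ)*Δt)) (by linarith [hΔt]) le_rfl]
      rw [Fin.eta]
      field_simp
      ring
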